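/- Let c ≥ 1, n ≥ 1, and p ≥ (c-1)n with p ≥ 1. Define χ_k = C_k/4^k (scaled Catalan numbers) and suppose a positive sequence (A_k)_{0≤k≤p} satisfies A_0 = 1, A_1 = c, and the recursion A_{k+1} = 2(c+1)·((2k+1)/(2k+4))·A_k - ((c-1)² - k²/n²)·((k-1)/(k+2))·A_{k-1} for 1 ≤ k ≤ p-1. Then N_k := A_k/χ_k satisfies N_k ≤ 4(√c+1)^{2k}(1 + 2p²/(c²n²))^k for all 1 ≤ k ≤ p. -/

import Mathlib

lemma catalan_step (k : ℕ) : (k+2) * catalan (k+1) = 2*(2*k+1) * catalan k := by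
  have h1 := succ_mul_catalan_eq_centralBinom k
  have h2 := succ_mul_catalan_eq_centralBinom (k+1)
  have h3 := Nat.succ_mul_centralBinom_succ k
  have : (k+1) * ((k+2) * catalan (k+1)) = (k+1) * (2*(2*k+1) * catalan k) := by
    rw [show k+1+1 = k+2 from rfl] at h2
    rw [h2, h3, ← h1]; ring
  exact Nat.eq_of_mul_eq_mul_left (Nat.succ_pos k) this

lemma chi_step (k : ℕ) :
    ((catalan (k+1) : ℝ)) / 4 ^ (k+1)
      = (2*(k:ℝ)+1)/(2*(k:ℝ)+4) * ((catalan k : ℝ) / 4 ^ k) := by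
  have h : ((k:ℝ)+2) * (catalan (k+1) : ℝ) = 2*(2*(k:ℝ)+1) * (catalan k : ℝ) := by
    exact_mod_cast congrArg (Nat.cast : ℕ → ℝ) (catalan_step k)
  have hk2 : (k:ℝ) + 2 ≠ 0 := by positivity
  have hk4 : 2*(k:ℝ) + 4 ≠ 0 := by positivity
  have h4 : (4:ℝ) ^ (k+1) = 4 * 4 ^ k := by ring
  field_simp [h4]
  have h' := congrArg (fun x => x * (2*(4:ℝ)^k)) h
  rw [h4]
  linarith [h']


lemma iden_aux (c D u X x y : ℝ) (hu : 0 ≤ u) (hX : X ≠ 0) :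
    (2*(c+1) * ((2*(u+1)+1)/(2*(u+1)+4)) * x - D * ((u+1-1)/(u+1+2)) * y)
      / ((2*(u+1)+1)/(2*(u+1)+4) * ((2*u+1)/(2*u+4) * X))
    = 2*(c+1) * (x / ((2*u+1)/(2*u+4) * X))
      - D * (4*u*(u+2)/((2*u+1)*(2*u+3))) * (y / X) := by
  have e1 : (2*u+1) ≠ 0 := by positivity
  have e2 : (2*u+4) ≠ 0 := by positivity
  have e3 : (2*(u+1)+1) ≠ 0 := by positivity
  have e4 : (2*(u+1)+4) ≠ 0 := by positivity
  have e5 : (u+1+2) ≠ 0 := by positivity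
  have e7 : (2*u+3) ≠ 0 := by positivity
  field_simp
  ring

set_option maxHeartbeats 1600000 in
theorem wishart_moment_bound_large_p
    (c : ℝ) (hc : 1 ≤ c) (n : ℕ) (hn : 1 ≤ n) (p : ℕ) (hp : 1 ≤ p)
    (hpc : (c - 1) * n ≤ (p : ℝ))
    (A : ℕ → ℝ) (hApos : ∀ k, k ≤ p → 0 < A k)
    (hA0 : A 0 = 1) (hA1 : A 1 = c)
    (hrec : ∀ k, 1 ≤ k → k ≤ p - 1 →
      A (k + 1) = 2 * (c + 1) * ((2 * (k : ℝ) + 1) / (2 * (k : ℝ) + 4)) * A k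
        - ((c - 1) ^ 2 - (k : ℝ) ^ 2 / (n : ℝ) ^ 2) *
            (((k : ℝ) - 1) / ((k : ℝ) + 2)) * A (k - 1)) :
    ∀ k, 1 ≤ k → k ≤ p →
      A k / ((catalan k : ℝ) / 4 ^ k)
        ≤ 4 * (Real.sqrt c + 1) ^ (2 * k) *
            (1 + 2 * (p : ℝ) ^ 2 / (c ^ 2 * (n : ℝ) ^ 2)) ^ k := by
  have hc0 : (0:ℝ) < c := lt_of_lt_of_le one_pos hc
  have hn0 : (0:ℝ) < (n:ℝ) := by exact_mod_cast hn
  have hp0 : (0:ℝ) < (p:ℝ) := by exact_mod_cast hp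
  set s := Real.sqrt c with hs_def
  have hs2 : s^2 = c := Real.sq_sqrt hc0.le
  have hs1 : 1 ≤ s := by
    rw [hs_def, show (1:ℝ) = Real.sqrt 1 by simp]
    exact Real.sqrt_le_sqrt hc
  set a : ℝ := (s+1)^2 with ha_def
  set t : ℝ := 1 + 2 * (p:ℝ)^2 / (c^2 * (n:ℝ)^2) with ht_def
  set q : ℝ := (p:ℝ)^2 / (n:ℝ)^2 with hq_def
  have hq0 : 0 < q := by positivity
  have ha0 : 0 < a := by positivity
  have hca : c ≤ a := by nlinarith [hs1]
  have ht1 : 1 ≤ t := by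
    rw [ht_def]; nlinarith [hq0, sq_nonneg ((p:ℝ)/(c*(n:ℝ))), div_pos (by positivity : (0:ℝ) < 2*(p:ℝ)^2) (by positivity : (0:ℝ) < c^2*(n:ℝ)^2)]
  have htq : c^2 * t = c^2 + 2*q := by
    rw [ht_def, hq_def]; field_simp
  set E : ℝ := a + q/c with hE_def
  have hE0 : 0 < E := by positivity
  -- (c-1)^2 ≤ q
  have hcq : (c-1)^2 ≤ q := by
    have h1 : ((c-1)*(n:ℝ))^2 ≤ (p:ℝ)^2 := by
      have h0 : 0 ≤ (c-1)*(n:ℝ) := by nlinarith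
      nlinarith [hpc]
    rw [hq_def, le_div_iff₀ (by positivity : (0:ℝ) < (n:ℝ)^2)]
    nlinarith [h1]
  -- 2(c+1) ≤ E
  have hE : 2*(c+1) ≤ E := by
    have h1 : c*(s-1)^2 ≤ q := by
      have ha : c*(s-1)^2 ≤ (c-1)^2 := by
        rw [← hs2]
        nlinarith [mul_nonneg (sq_nonneg (s-1)) (by linarith : (0:ℝ) ≤ 2*s+1)]
      linarith [hcq]
    have h2 : (s-1)^2 ≤ q/c := by rw [le_div_iff₀ hc0]; nlinarith [h1]
    rw [hE_def, ha_def]; nlinarith [h2, hs2]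
  -- aux inequality for induction step
  have haux : E*(a*t) + q ≤ a^2*t^2 := by
    have h2 : c^2 * E = a*c^2 + q*c := by rw [hE_def]; field_simp
    have key : c^2*(E*(a*t)+q) ≤ c^2*(a^2*t^2) := by
      have e1 : c^2*(E*(a*t)+q) = (a*c^2+q*c)*(a*t) + c^2*q := by rw [← h2]; ring
      have e2 : c^2*(a^2*t^2) = (c^2+2*q)*(a^2*t) := by rw [← htq]; ring
      rw [e1, e2]
      have f1 : q*(c*(a*t)) ≤ q*(a*(a*t)) := by
        apply mul_le_mul_of_nonneg_left _ hq0.le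
        exact mul_le_mul_of_nonneg_right hca (by positivity)
      have f2 : q*c^2 ≤ q*(a^2*t) := by
        apply mul_le_mul_of_nonneg_left _ hq0.le
        nlinarith [hca, ht1, hc0, ha0]
      linarith [f1, f2]
    exact le_of_mul_le_mul_left key (by positivity)
  have hχpos : ∀ k : ℕ, (0:ℝ) < (catalan k : ℝ) / 4^k := by
    intro k
    have hck : 0 < catalan k := by
      rcases Nat.eq_zero_or_pos (catalan k) with h | h
      · have h1 := succ_mul_catalan_eq_centralBinom k
        have h2 := Nat.centralBinom_pos k
        rw [h] at h1; omega
      · exact h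
    have : (0:ℝ) < (catalan k : ℝ) := by exact_mod_cast hck
    positivity
  have key : ∀ k, k ≤ p → A k / ((catalan k : ℝ) / 4^k) ≤ 4 * a^k * t^k := by
    intro k
    induction k using Nat.twoStepInduction with
    | zero =>
      intro _
      simp only [catalan_zero, pow_zero, Nat.cast_one, hA0]
      norm_num
    | one =>
      intro _
      have h1 : A 1 / ((catalan 1 : ℝ)/4^1) = 4*c := by
        rw [hA1, catalan_one]; norm_num; ring
      rw [h1, pow_one, pow_one]
      linarith [hca, mul_le_mul_of_nonneg_left ht1 ha0.le]
    | more k ih0 ih1 =>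
      intro hk2p
      have hk1p : k + 1 ≤ p := by omega
      have hkp : k ≤ p := by omega
      have N1 := hApos (k+1) hk1p
      have N0 := hApos k hkp
      have hχ1 := hχpos (k+1)
      have hχ0 := hχpos k
      -- recursion at index k+1
      have hrecm := hrec (k+1) (by omega) (by omega)
      push_cast at hrecm
      rw [show k + 2 = k + 1 + 1 from rfl]
      set D : ℝ := (c-1)^2 - ((k:ℝ)+1)^2/(n:ℝ)^2 with hD_def
      set r : ℝ := 4*(k:ℝ)*((k:ℝ)+2)/((2*(k:ℝ)+1)*(2*(k:ℝ)+3)) with hr_def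
      have hc1 := chi_step (k+1)
      have hc0' := chi_step k
      push_cast at hc1
      have hiden : A (k+1+1) / ((catalan (k+1+1) : ℝ)/4^(k+1+1))
          = 2*(c+1) * (A (k+1) / ((catalan (k+1) : ℝ)/4^(k+1)))
            - D * r * (A k / ((catalan k : ℝ)/4^k)) := by
        rw [hc1, hc0', hrecm, hr_def]
        exact iden_aux c D (k:ℝ) ((catalan k : ℝ)/4^k) (A (k+1)) (A k)
          (Nat.cast_nonneg k) (ne_of_gt hχ0)
      -- D, r bounds
      have hr0 : 0 ≤ r := by rw [hr_def]; positivity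
      have hr1 : r ≤ 1 := by
        rw [hr_def, div_le_one (by positivity)]
        have h3 : (2*(k:ℝ)+1)*(2*(k:ℝ)+3) - 4*(k:ℝ)*((k:ℝ)+2) = 3 := by ring
        linarith [h3]
      have hkplt : ((k:ℝ)+1) ≤ (p:ℝ) := by exact_mod_cast hk1p
      have hDr : -(D*r) ≤ q := by
        rcases le_total D 0 with h | h
        · have h1 : -D ≤ q := by
            rw [hD_def, hq_def]
            have : ((k:ℝ)+1)^2/(n:ℝ)^2 ≤ (p:ℝ)^2/(n:ℝ)^2 := by
              apply div_le_div_of_nonneg_right ?_ (by positivity)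
              exact pow_le_pow_left₀ (by positivity) hkplt 2
            linarith [sq_nonneg (c-1), this]
          linarith [mul_le_mul_of_nonneg_left hr1 (neg_nonneg.mpr h), h1]
        · linarith [mul_nonneg h hr0, hq0.le]
      have hN1pos : 0 < A (k+1) / ((catalan (k+1) : ℝ)/4^(k+1)) := div_pos N1 hχ1
      have hN0pos : 0 < A k / ((catalan k : ℝ)/4^k) := div_pos N0 hχ0
      have hstep : A (k+1+1) / ((catalan (k+1+1) : ℝ)/4^(k+1+1))
          ≤ E * (A (k+1) / ((catalan (k+1) : ℝ)/4^(k+1))) + q * (A k / ((catalan k : ℝ)/4^k)) := by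
        rw [hiden]
        linarith [mul_le_mul_of_nonneg_right hE hN1pos.le,
          mul_le_mul_of_nonneg_right hDr hN0pos.le]
      have hI1 := ih1 hk1p
      have hI0 := ih0 hkp
      have hPT : (0:ℝ) < a^k * t^k := by positivity
      calc A (k+1+1) / ((catalan (k+1+1) : ℝ)/4^(k+1+1))
          ≤ E * (A (k+1) / ((catalan (k+1) : ℝ)/4^(k+1))) + q * (A k / ((catalan k : ℝ)/4^k)) := hstep
        _ ≤ E * (4 * a^(k+1) * t^(k+1)) + q * (4 * a^k * t^k) := by
            have := mul_le_mul_of_nonneg_left hI1 hE0.le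
            have := mul_le_mul_of_nonneg_left hI0 hq0.le
            linarith
        _ = (E*(a*t) + q) * (4 * a^k * t^k) := by ring
        _ ≤ (a^2*t^2) * (4 * a^k * t^k) := mul_le_mul_of_nonneg_right haux (by positivity)
        _ = 4 * a^(k+1+1) * t^(k+1+1) := by ring
  intro k hk1 hkp
  have h := key k hkp
  rw [pow_mul]
  exact h
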